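/- arXiv:2407.10392 — 8 statements merged into one kernel-verified Lean document; each statement's English description precedes it below -/
import Mathlib

section
/- Let ε > 0 and let A, B : (−ε, ε) → ℝ be real analytic functions. If there exists a sequence of points t_n ∈ (−ε, ε) with t_n ≠ 0, t_n → 0, and A(t_n) − B(t_n)·log|t_n| = 0 for every n, then A and B vanish identically on (−ε, ε). -/
open Set Filter

/-- Lemma 3.4: if real analytic `A`, `B` on `(-ε, ε)` satisfy
`A(tₙ) - B(tₙ) log|tₙ| = 0` along a sequence of nonzero points `tₙ → 0`,
then `A` and `B` vanish identically. -/
theorem stmt_0 (ε : ℝ) (hε : 0 < ε) (A B : ℝ → ℝ)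
    (hA : AnalyticOnNhd ℝ A (Ioo (-ε) ε))
    (hB : AnalyticOnNhd ℝ B (Ioo (-ε) ε))
    (t : ℕ → ℝ) (ht : ∀ n, t n ∈ Ioo (-ε) ε) (htne : ∀ n, t n ≠ 0)
    (hlim : Tendsto t atTop (nhds 0))
    (hzero : ∀ n, A (t n) - B (t n) * Real.log |t n| = 0) :
    ∀ x ∈ Ioo (-ε) ε, A x = 0 ∧ B x = 0 := by
  have h0mem : (0:ℝ) ∈ Ioo (-ε) ε := by constructor <;> simpa using hε
  have heq : ∀ n, A (t n) = B (t n) * Real.log |t n| := fun n => by linarith [hzero n]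
  -- `t` tends to 0 within the punctured neighborhood
  have htt : Tendsto t atTop (nhdsWithin (0:ℝ) {0}ᶜ) :=
    tendsto_nhdsWithin_iff.2 ⟨hlim, Eventually.of_forall fun n => htne n⟩
  -- log |t n| → -∞
  have hlog : Tendsto (fun n => Real.log |t n|) atTop atBot := by
    have h := Real.tendsto_log_nhdsNE_zero.comp htt
    simp only [Real.log_abs]
    exact h
  -- |t n| → 0
  have habs0 : Tendsto (fun n => |t n|) atTop (nhds 0) := by
    simpa using hlim.abs
  have habs : Tendsto (fun n => |t n|) atTop (nhdsWithin (0:ℝ) (Ioi 0)) :=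
    tendsto_nhdsWithin_iff.2 ⟨habs0,
      Eventually.of_forall fun n => abs_pos.2 (htne n)⟩
  -- t^j * log|t| → 0 for j ≥ 1
  have hpowlog : ∀ j : ℕ, 1 ≤ j →
      Tendsto (fun n => t n ^ j * Real.log |t n|) atTop (nhds 0) := by
    intro j hj
    have h1 : Tendsto (fun n => Real.log |t n| * |t n| ^ (1:ℝ)) atTop (nhds 0) :=
      (tendsto_log_mul_rpow_nhdsGT_zero zero_lt_one).comp habs
    have h1' : Tendsto (fun n => abs (Real.log |t n| * |t n| ^ (1:ℝ))) atTop (nhds 0) := by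
      simpa using h1.abs
    apply squeeze_zero_norm' ?_ h1'
    have hsmall : ∀ᶠ n in atTop, |t n| ≤ 1 := by
      filter_upwards [habs0.eventually (eventually_le_nhds (by norm_num : (0:ℝ) < 1))]
        with n hn using hn
    filter_upwards [hsmall] with n hn
    have h0 : (0:ℝ) ≤ |t n| := abs_nonneg _
    calc ‖t n ^ j * Real.log |t n|‖ = |t n| ^ j * abs (Real.log |t n|) := by
          rw [Real.norm_eq_abs, abs_mul, abs_pow]
      _ ≤ |t n| ^ 1 * abs (Real.log |t n|) := by
          exact mul_le_mul_of_nonneg_right (pow_le_pow_of_le_one h0 hn hj) (abs_nonneg _)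
      _ = abs (Real.log |t n| * |t n| ^ (1:ℝ)) := by
          rw [Real.rpow_one, pow_one, abs_mul, abs_abs, mul_comm]
  -- Step 1: B vanishes frequently near 0
  have hBfreq : ∃ᶠ z in nhdsWithin (0:ℝ) {0}ᶜ, B z = 0 := by
    by_contra hc
    rw [not_frequently] at hc
    have hBne : ∀ᶠ n in atTop, B (t n) ≠ 0 := htt.eventually (hc.mono fun z hz => hz)
    have hA0 : AnalyticAt ℝ A 0 := hA 0 h0mem
    have hB0 : AnalyticAt ℝ B 0 := hB 0 h0mem
    -- B's order is finite
    have hBtop : analyticOrderAt B 0 ≠ ⊤ := by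
      intro htop
      have hev : ∀ᶠ z in nhdsWithin (0:ℝ) {0}ᶜ, B z = 0 :=
        (analyticOrderAt_eq_top.1 htop).filter_mono nhdsWithin_le_nhds
      obtain ⟨n, hn1, hn2⟩ := ((htt.eventually hev).and hBne).exists
      exact hn2 hn1
    obtain ⟨k, hk⟩ := (WithTop.ne_top_iff_exists).1 hBtop
    obtain ⟨g, hg, hg0, hgeq⟩ := (hB0.analyticOrderAt_eq_natCast (n := k)).1 hk.symm
    -- A's order is finite
    have hlogne : ∀ᶠ n in atTop, Real.log |t n| < 0 := hlog.eventually (eventually_lt_atBot 0)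
    have hAtop : analyticOrderAt A 0 ≠ ⊤ := by
      intro htop
      have hev : ∀ᶠ n in atTop, A (t n) = 0 :=
        hlim.eventually (analyticOrderAt_eq_top.1 htop)
      obtain ⟨n, hn1, hn2, hn3⟩ := (hev.and (hBne.and hlogne)).exists
      have := heq n
      rw [hn1] at this
      exact hn3.ne (by
        have := mul_eq_zero.1 this.symm
        tauto)
    obtain ⟨m, hm⟩ := (WithTop.ne_top_iff_exists).1 hAtop
    obtain ⟨h, hh, hh0, hheq⟩ := (hA0.analyticOrderAt_eq_natCast (n := m)).1 hm.symm
    -- the local expansions hold eventually along the sequence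
    have hexp : ∀ᶠ n in atTop,
        t n ^ m * h (t n) = t n ^ k * g (t n) * Real.log |t n| := by
      filter_upwards [hlim.eventually hheq, hlim.eventually hgeq] with n h1 h2
      have e1 : A (t n) = t n ^ m * h (t n) := by simpa [smul_eq_mul] using h1
      have e2 : B (t n) = t n ^ k * g (t n) := by simpa [smul_eq_mul] using h2
      rw [← e1, ← e2]; exact heq n
    rcases le_or_gt k m with hkm | hkm
    · -- k ≤ m : then g(t) log|t| = t^(m-k) h(t) stays bounded, contradiction with log → -∞
      have hexp' : ∀ᶠ n in atTop,
          t n ^ (m - k) * h (t n) = g (t n) * Real.log |t n| := by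
        filter_upwards [hexp] with n hn
        have hpk : t n ^ k ≠ 0 := pow_ne_zero _ (htne n)
        have : t n ^ k * (t n ^ (m - k) * h (t n)) =
            t n ^ k * (g (t n) * Real.log |t n|) := by
          rw [← mul_assoc, ← pow_add, Nat.add_sub_cancel' hkm, hn]; ring
        exact mul_left_cancel₀ hpk this
      -- LHS tends to a finite limit
      have hLHS : Tendsto (fun n => t n ^ (m - k) * h (t n)) atTop
          (nhds ((0:ℝ) ^ (m - k) * h 0)) :=
        (hlim.pow _).mul (hh.continuousAt.tendsto.comp hlim)
      -- |RHS| tends to atTop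
      have hgabs : Tendsto (fun n => abs (g (t n))) atTop (nhds (abs (g 0))) :=
        ((hg.continuousAt.tendsto.comp hlim)).abs
      have hlogabs : Tendsto (fun n => abs (Real.log |t n|)) atTop atTop :=
        tendsto_abs_atBot_atTop.comp hlog
      have hRHS : Tendsto (fun n => abs (g (t n) * Real.log |t n|)) atTop atTop := by
        simp only [abs_mul]
        exact Filter.Tendsto.pos_mul_atTop (abs_pos.2 hg0) hgabs hlogabs
      have hboth : Tendsto (fun n => abs (t n ^ (m - k) * h (t n))) atTop atTop :=
        hRHS.congr' (hexp'.mono fun n hn => by rw [← hn])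
      exact not_tendsto_atTop_of_tendsto_nhds hLHS.abs hboth
    · -- m < k : then h(t) = t^(k-m) g(t) log|t| → 0, contradicting h 0 ≠ 0
      have hexp' : ∀ᶠ n in atTop,
          h (t n) = t n ^ (k - m) * Real.log |t n| * g (t n) := by
        filter_upwards [hexp] with n hn
        have hpm : t n ^ m ≠ 0 := pow_ne_zero _ (htne n)
        have : t n ^ m * h (t n) =
            t n ^ m * (t n ^ (k - m) * Real.log |t n| * g (t n)) := by
          rw [hn, ← mul_assoc, ← mul_assoc, ← pow_add,
            Nat.add_sub_cancel' hkm.le]; ring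
        exact mul_left_cancel₀ hpm this
      have hRHS : Tendsto (fun n => t n ^ (k - m) * Real.log |t n| * g (t n)) atTop
          (nhds (0 * g 0)) :=
        (hpowlog (k - m) (by omega)).mul (hg.continuousAt.tendsto.comp hlim)
      have hLHS : Tendsto (fun n => h (t n)) atTop (nhds (h 0)) :=
        hh.continuousAt.tendsto.comp hlim
      have : h 0 = 0 * g 0 :=
        tendsto_nhds_unique (hLHS.congr' hexp') hRHS
      simp at this
      exact hh0 this
  -- Step 2: B ≡ 0 by the identity theorem
  have hBzero : EqOn B 0 (Ioo (-ε) ε) :=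
    hB.eqOn_zero_of_preconnected_of_frequently_eq_zero
      (isPreconnected_Ioo) h0mem hBfreq
  -- Step 3: then A vanishes along the sequence, hence A ≡ 0
  have hAseq : ∀ n, A (t n) = 0 := by
    intro n
    have := heq n
    rw [hBzero (ht n)] at this
    simpa using this
  have hAfreq : ∃ᶠ z in nhdsWithin (0:ℝ) {0}ᶜ, A z = 0 :=
    htt.frequently ((Eventually.of_forall hAseq).frequently)
  have hAzero : EqOn A 0 (Ioo (-ε) ε) :=
    hA.eqOn_zero_of_preconnected_of_frequently_eq_zero
      (isPreconnected_Ioo) h0mem hAfreq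
  intro x hx
  exact ⟨hAzero hx, hBzero hx⟩
end

section
/- Let n ≥ 1 and let Γ be a subgroup of GL_n(ℤ) such that the only vector v ∈ ℂⁿ satisfying Tv = v for all T ∈ Γ is v = 0. If v ∈ ℂⁿ satisfies (T − I)v ∈ ℤⁿ for every T ∈ Γ, then v ∈ ℚⁿ. -/
open Matrix

/-- Algebraic core of Lemma 3.1: if `Γ ≤ GL_n(ℤ)` has no nonzero fixed vector in `ℂⁿ`,
and `v ∈ ℂⁿ` satisfies `(T - I)v ∈ ℤⁿ` for all `T ∈ Γ`, then `v ∈ ℚⁿ`. -/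
theorem stmt_4 (n : ℕ) (hn : 1 ≤ n) (Γ : Subgroup (GL (Fin n) ℤ))
    (hfix : ∀ v : Fin n → ℂ,
      (∀ T ∈ Γ, ((T : Matrix (Fin n) (Fin n) ℤ).map (Int.cast : ℤ → ℂ)).mulVec v = v) →
      v = 0)
    (v : Fin n → ℂ)
    (hv : ∀ T ∈ Γ, ∀ i : Fin n, ∃ m : ℤ,
      (((T : Matrix (Fin n) (Fin n) ℤ).map (Int.cast : ℤ → ℂ)).mulVec v - v) i = m) :
    ∀ i : Fin n, ∃ q : ℚ, v i = q := by
  classical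
  -- the set of rows of `T - I`, `T ∈ Γ`, as rational vectors
  set S : Set (Fin n → ℚ) :=
    {r | ∃ T ∈ Γ, ∃ i : Fin n,
      r = fun j => ((T : Matrix (Fin n) (Fin n) ℤ) i j : ℚ) - if i = j then 1 else 0} with hS
  -- these rows span `ℚⁿ`
  have hspan : Submodule.span ℚ S = ⊤ := by
    by_contra h
    obtain ⟨f, hf0, hfmap⟩ :=
      Submodule.exists_dual_map_eq_bot_of_lt_top (p := Submodule.span ℚ S)
        (lt_top_iff_ne_top.mpr h) inferInstance
    set w : Fin n → ℚ := fun j => f (Pi.single j 1) with hw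
    have hfx : ∀ x, f x = ∑ j, x j * w j := by
      intro x
      rw [LinearMap.pi_apply_eq_sum_univ f x, hw]
      simp only [smul_eq_mul]
      exact Finset.sum_congr rfl fun j _ => by
        congr 1; congr 1; funext k; simp [Pi.single_apply, eq_comm]
    have hker : ∀ r ∈ S, ∑ j, r j * w j = 0 := by
      intro r hr
      have hmem : f r ∈ (Submodule.span ℚ S).map f :=
        Submodule.mem_map_of_mem (Submodule.subset_span hr)
      rw [hfmap, Submodule.mem_bot] at hmem
      rw [← hfx]; exact hmem
    -- the rational vector `w` is fixed by all of `Γ`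
    set vC : Fin n → ℂ := fun j => ((w j : ℚ) : ℂ) with hvC
    have hfixed : ∀ T ∈ Γ, ((T : Matrix (Fin n) (Fin n) ℤ).map (Int.cast : ℤ → ℂ)).mulVec vC = vC := by
      intro T hT
      funext i
      have hr : (fun j => ((T : Matrix (Fin n) (Fin n) ℤ) i j : ℚ) - if i = j then 1 else 0) ∈ S :=
        ⟨T, hT, i, rfl⟩
      have h0 := hker _ hr
      have h1 : ∑ j, ((T : Matrix (Fin n) (Fin n) ℤ) i j : ℚ) * w j = w i := by
        have : ∑ j, (((T : Matrix (Fin n) (Fin n) ℤ) i j : ℚ) - if i = j then 1 else 0) * w j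
            = (∑ j, ((T : Matrix (Fin n) (Fin n) ℤ) i j : ℚ) * w j)
              - ∑ j, (if i = j then 1 else 0) * w j := by
          rw [← Finset.sum_sub_distrib]; congr 1; funext j; ring
        rw [this] at h0
        have h2 : ∑ j, (if i = j then (1:ℚ) else 0) * w j = w i := by
          simp [Finset.sum_ite_eq]
        rw [h2] at h0
        linarith
      have := congrArg (fun q : ℚ => (q : ℂ)) h1
      push_cast at this
      simpa [Matrix.mulVec, dotProduct, hvC] using this
    have hzero := hfix vC hfixed
    have hw0 : w = 0 := by
      funext j
      have := congrFun hzero j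
      simpa [hvC] using this
    exact hf0 (LinearMap.ext fun x => by rw [hfx]; simp [hw0])
  -- the linear functional `x ↦ ∑ xⱼ vⱼ`
  set L : (Fin n → ℚ) →ₗ[ℚ] ℂ :=
    { toFun := fun x => ∑ j, (x j : ℂ) * v j
      map_add' := fun x y => by
        simp only [Pi.add_apply]
        rw [← Finset.sum_add_distrib]
        exact Finset.sum_congr rfl fun j _ => by push_cast; ring
      map_smul' := fun q x => by
        simp only [RingHom.id_apply, Pi.smul_apply, smul_eq_mul, Finset.smul_sum, Rat.smul_def]
        exact Finset.sum_congr rfl fun j _ => by push_cast; ring } with hL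
  set Q : Submodule ℚ ℂ := LinearMap.range (Algebra.linearMap ℚ ℂ) with hQ
  have hle : Submodule.span ℚ S ≤ Q.comap L := by
    rw [Submodule.span_le]
    rintro r ⟨T, hT, i, rfl⟩
    obtain ⟨m, hm⟩ := hv T hT i
    refine ⟨(m : ℚ), ?_⟩
    have hLr : L (fun j => ((T : Matrix (Fin n) (Fin n) ℤ) i j : ℚ) - if i = j then 1 else 0)
        = (∑ j, (((T : Matrix (Fin n) (Fin n) ℤ) i j : ℤ) : ℂ) * v j) - v i := by
      simp only [hL, LinearMap.coe_mk, AddHom.coe_mk]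
      have key : ∀ j, ((((T : Matrix (Fin n) (Fin n) ℤ) i j : ℚ) - if i = j then 1 else 0 : ℚ) : ℂ) * v j
          = (((T : Matrix (Fin n) (Fin n) ℤ) i j : ℤ) : ℂ) * v j - (if i = j then 1 else 0) * v j := by
        intro j
        rcases eq_or_ne i j with h | h <;> simp [h] <;> push_cast <;> ring
      rw [Finset.sum_congr rfl fun j _ => key j, Finset.sum_sub_distrib]
      congr 1
      simp [ite_mul, Finset.sum_ite_eq]
    have hm' : (∑ j, (((T : Matrix (Fin n) (Fin n) ℤ) i j : ℤ) : ℂ) * v j) - v i = m := by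
      simpa [Matrix.mulVec, dotProduct] using hm
    simp [Algebra.linearMap_apply, hLr, hm']
  intro i
  have hmem : (Pi.single i 1 : Fin n → ℚ) ∈ Q.comap L := by
    apply hle
    rw [hspan]; trivial
  obtain ⟨q, hq⟩ := hmem
  refine ⟨q, ?_⟩
  have hLe : L (Pi.single i 1) = v i := by
    simp only [hL, LinearMap.coe_mk, AddHom.coe_mk]
    rw [Finset.sum_eq_single i]
    · simp
    · intro j _ hj; simp [Pi.single_apply, hj]
    · intro hi; exact absurd (Finset.mem_univ i) hi
  rw [← hLe, ← hq]
  simp [Algebra.linearMap_apply]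
end

section
/- Let Δ ⊆ ℂ be an open disc centered at 0, and let F, K : Δ → ℂ be holomorphic functions such that Im K(z) ≠ 0 for every z ∈ Δ ∖ {0}. If there exists a sequence z_n ∈ Δ ∖ {0} with z_n → 0 such that Im F(z_n) = 0 and Im(F(z_n)·K(z_n)) = 0 for all n, then F vanishes identically on Δ. -/
open Metric Filter

/-- Concluding argument of §2 (trivial monodromy case): if `F`, `K` are holomorphic on a
disc `Δ` with `Im K ≠ 0` off the origin, and `Im F` and `Im(F·K)` both vanish along a
sequence of nonzero points tending to `0`, then `F ≡ 0` on `Δ`. -/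
theorem stmt_5 (ρ : ℝ) (hρ : 0 < ρ) (F K : ℂ → ℂ)
    (hF : AnalyticOnNhd ℂ F (ball 0 ρ))
    (hK : AnalyticOnNhd ℂ K (ball 0 ρ))
    (hKim : ∀ z ∈ ball (0 : ℂ) ρ, z ≠ 0 → (K z).im ≠ 0)
    (z : ℕ → ℂ) (hz : ∀ n, z n ∈ ball (0 : ℂ) ρ) (hzne : ∀ n, z n ≠ 0)
    (hlim : Tendsto z atTop (nhds 0))
    (hImF : ∀ n, (F (z n)).im = 0)
    (hImFK : ∀ n, (F (z n) * K (z n)).im = 0) :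
    ∀ w ∈ ball (0 : ℂ) ρ, F w = 0 := by
  have hFz : ∀ n, F (z n) = 0 := by
    intro n
    have h := hImFK n
    rw [Complex.mul_im, hImF n, zero_mul, add_zero] at h
    have hre : (F (z n)).re = 0 :=
      by_contra fun hne => hKim (z n) (hz n) (hzne n) ((mul_eq_zero.mp h).resolve_left hne)
    exact Complex.ext hre (hImF n)
  have htend : Tendsto z atTop (nhdsWithin 0 {(0:ℂ)}ᶜ) :=
    tendsto_nhdsWithin_of_tendsto_nhds_of_eventually_within z hlim
      (Eventually.of_forall hzne)
  have hfreq : ∃ᶠ w in nhdsWithin (0:ℂ) {(0:ℂ)}ᶜ, F w = 0 :=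
    htend.frequently (Frequently.of_forall hFz)
  exact fun w hw =>
    hF.eqOn_zero_of_preconnected_of_frequently_eq_zero
      (convex_ball (0:ℂ) ρ).isPreconnected (mem_ball_self hρ) hfreq hw
end

section
/- Let ε > 0, let h be a holomorphic function on the disc {z ∈ ℂ : |z| < ε}, and let a ∈ ℝ with a ≠ 0. Then there exists δ ∈ (0, ε] such that a·log|z| + Im h(z) ≠ 0 for all z with 0 < |z| < δ. -/
open Metric Set

/-- For holomorphic `h` on a disc of radius `ε` and `a ≠ 0`, the function
`a log|z| + Im h(z)` has no zero on a sufficiently small punctured disc. -/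
theorem stmt_6 (ε : ℝ) (hε : 0 < ε) (h : ℂ → ℂ)
    (hh : AnalyticOnNhd ℂ h (ball 0 ε)) (a : ℝ) (ha : a ≠ 0) :
    ∃ δ ∈ Ioc (0 : ℝ) ε, ∀ z : ℂ, 0 < ‖z‖ → ‖z‖ < δ →
      a * Real.log ‖z‖ + (h z).im ≠ 0 := by
  have hc : ContinuousAt h 0 := (hh 0 (mem_ball_self hε)).continuousAt
  rw [Metric.continuousAt_iff] at hc
  obtain ⟨δ₁, hδ₁, hδ₁'⟩ := hc 1 one_pos
  set M : ℝ := |(h 0).im| + 1 with hM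
  have hMpos : 0 < M := by positivity
  have haa : 0 < |a| := abs_pos.mpr ha
  refine ⟨min ε (min δ₁ (Real.exp (-(M / |a|)))), ⟨by positivity, min_le_left _ _⟩,
    fun z hz0 hzδ => ?_⟩
  have hz1 : ‖z‖ < δ₁ := lt_of_lt_of_le hzδ (le_trans (min_le_right _ _) (min_le_left _ _))
  have hz2 : ‖z‖ < Real.exp (-(M / |a|)) :=
    lt_of_lt_of_le hzδ (le_trans (min_le_right _ _) (min_le_right _ _))
  have him : |(h z).im| < M := by
    have h1 : dist (h z) (h 0) < 1 := hδ₁' (by simpa using hz1)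
    have h2 : |(h z).im - (h 0).im| ≤ dist (h z) (h 0) := by
      rw [Complex.dist_eq]
      simpa using Complex.abs_im_le_norm (h z - h 0)
    have h4 : |(h z).im| - |(h 0).im| ≤ |(h z).im - (h 0).im| :=
      abs_sub_abs_le_abs_sub _ _
    rw [hM]; linarith
  have hlog : Real.log ‖z‖ < -(M / |a|) := by
    have := Real.log_lt_log hz0 hz2
    rwa [Real.log_exp] at this
  have hbig : M < |a * Real.log ‖z‖| := by
    rw [abs_mul]
    have hneg : Real.log ‖z‖ < 0 := by linarith [div_pos hMpos haa]
    have h3 : M / |a| < |Real.log ‖z‖| := by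
      rw [abs_of_neg hneg]
      linarith
    calc M = |a| * (M / |a|) := by field_simp
      _ < |a| * |Real.log ‖z‖| := by exact mul_lt_mul_of_pos_left h3 haa
  intro heq
  have : a * Real.log ‖z‖ = -(h z).im := by linarith
  rw [this, abs_neg] at hbig
  linarith
end

section
/- Let 1 ≤ d, let U ⊆ ℂ^d be open, and let R : U → ℂ^N be a holomorphic map such that for every z ∈ U the 2d vectors ∂R/∂z_1(z), …, ∂R/∂z_d(z), together with their complex conjugates, are linearly independent over ℂ in ℂ^N. Then the zero set of the map z ↦ Im R(z) (the componentwise imaginary part) consists of isolated points of U; that is, every point of U has a neighborhood containing at most one zero of Im R. -/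
open Set

/-- Lemma 4.1 (analytic content): if `R : U → ℂ^N` is holomorphic and at every point of
`U` the partial derivatives `∂R/∂z_j` together with their componentwise complex
conjugates are `ℂ`-linearly independent, then the zeroes of `Im R` are isolated in `U`. -/
theorem stmt_8 (d N : ℕ) (hd : 1 ≤ d) (U : Set (Fin d → ℂ)) (hU : IsOpen U)
    (R : (Fin d → ℂ) → Fin N → ℂ) (hR : AnalyticOnNhd ℂ R U)
    (hind : ∀ z ∈ U, LinearIndependent ℂ
      (Sum.elim (fun j : Fin d => fderiv ℂ R z (Pi.single j 1))
        (fun j : Fin d => star (fderiv ℂ R z (Pi.single j 1))))) :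
    ∀ z ∈ U, ∃ V : Set (Fin d → ℂ), IsOpen V ∧ z ∈ V ∧
      ∀ w₁ ∈ V ∩ U, ∀ w₂ ∈ V ∩ U,
        (∀ i, (R w₁ i).im = 0) → (∀ i, (R w₂ i).im = 0) → w₁ = w₂ := by
  intro z hz
  -- the componentwise imaginary-part map, as a continuous ℝ-linear map
  set L : (Fin N → ℂ) →L[ℝ] (Fin N → ℝ) :=
    ContinuousLinearMap.pi (fun i => Complex.imCLM.comp (ContinuousLinearMap.proj i)) with hL
  set A : (Fin d → ℂ) →L[ℂ] (Fin N → ℂ) := fderiv ℂ R z with hA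
  set f : (Fin d → ℂ) → (Fin N → ℝ) := fun w i => (R w i).im with hf
  set f' : (Fin d → ℂ) →L[ℝ] (Fin N → ℝ) := L.comp (A.restrictScalars ℝ) with hf'
  -- f has strict derivative f' at z
  have hAz : HasStrictFDerivAt R A z := (hR z hz).hasStrictFDerivAt
  have hstrict : HasStrictFDerivAt f f' z :=
    (L.hasStrictFDerivAt).comp z (hAz.restrictScalars ℝ)
  -- f' is injective
  have hinj : Function.Injective f' := by
    intro v w hvw
    have hv : f' (v - w) = 0 := by rw [map_sub, hvw, sub_self]
    set u : Fin d → ℂ := v - w with hu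
    -- each component of A u is real
    have him : ∀ i, (A u i).im = 0 := by
      intro i
      have := congrFun hv i
      simpa [f', L] using this
    -- A u = ∑ j, u j • A (Pi.single j 1)
    have hAu : A u = ∑ j, u j • A (Pi.single j 1) := by
      have : u = ∑ j, u j • (Pi.single j 1 : Fin d → ℂ) := by
        funext k
        simp [Finset.sum_apply, Pi.single_apply, mul_ite, mul_one, mul_zero]
      conv_lhs => rw [this]
      rw [map_sum]
      simp
    -- star (A u) = ∑ j, conj (u j) • star (A (Pi.single j 1))
    have hstar : star (A u) = ∑ j, (starRingEnd ℂ) (u j) • star (A (Pi.single j 1)) := by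
      rw [hAu, star_sum]
      refine Finset.sum_congr rfl fun j _ => ?_
      rw [star_smul, starRingEnd_apply]
    -- A u is fixed by conjugation
    have hfix : star (A u) = A u := by
      funext i
      have : (A u i).im = 0 := him i
      simp only [Pi.star_apply]
      exact Complex.conj_eq_iff_im.mpr this
    -- build the vanishing linear combination
    have hcomb : ∑ s : Fin d ⊕ Fin d,
        (Sum.elim u (fun j => -((starRingEnd ℂ) (u j))) s) •
        (Sum.elim (fun j : Fin d => A (Pi.single j 1))
          (fun j : Fin d => star (A (Pi.single j 1))) s) = 0 := by
      rw [Fintype.sum_sum_type]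
      simp only [Sum.elim_inl, Sum.elim_inr, neg_smul, Finset.sum_neg_distrib]
      rw [← hAu, ← hstar, hfix]
      abel
    have hLI := hind z hz
    rw [Fintype.linearIndependent_iff] at hLI
    have hall := hLI _ hcomb
    have : ∀ j, u j = 0 := fun j => hall (Sum.inl j)
    have : u = 0 := funext this
    exact sub_eq_zero.mp this
  -- f' is antilipschitz
  obtain ⟨K, hK0, hKanti⟩ :=
    (f'.toLinearMap.injective_iff_antilipschitz).mp hinj
  -- approximation
  set c : NNReal := K⁻¹ / 2 with hc
  have hcpos : 0 < c := by positivity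
  obtain ⟨s, hs_nhds, hs⟩ := hstrict.approximates_deriv_on_nhds (Or.inr hcpos)
  obtain ⟨t, hts, ht_open, hzt⟩ := mem_nhds_iff.mp hs_nhds
  refine ⟨t, ht_open, hzt, ?_⟩
  rintro w₁ ⟨hw₁t, hw₁U⟩ w₂ ⟨hw₂t, hw₂U⟩ h1 h2
  have hf1 : f w₁ = 0 := funext h1
  have hf2 : f w₂ = 0 := funext h2
  have happ := hs w₁ (hts hw₁t) w₂ (hts hw₂t)
  rw [hf1, hf2] at happ
  simp only [sub_self, zero_sub, norm_neg] at happ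
  -- antilipschitz bound
  have hanti : ‖w₁ - w₂‖ ≤ (K : ℝ) * ‖f' (w₁ - w₂)‖ := by
    have := hKanti.le_mul_dist w₁ w₂
    simpa [dist_eq_norm, ← map_sub] using this
  have hKc : (K : ℝ) * (c : ℝ) = 1 / 2 := by
    rw [hc]
    push_cast
    field_simp
  have : ‖w₁ - w₂‖ ≤ (1 / 2) * ‖w₁ - w₂‖ := by
    calc ‖w₁ - w₂‖ ≤ (K : ℝ) * ‖f' (w₁ - w₂)‖ := hanti
      _ ≤ (K : ℝ) * ((c : ℝ) * ‖w₁ - w₂‖) := by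
          apply mul_le_mul_of_nonneg_left happ (by positivity)
      _ = (1 / 2) * ‖w₁ - w₂‖ := by rw [← mul_assoc, hKc]
  have hn : ‖w₁ - w₂‖ ≤ 0 := by linarith
  have : w₁ - w₂ = 0 := by
    have := norm_nonneg (w₁ - w₂)
    exact norm_eq_zero.mp (le_antisymm hn this)
  exact sub_eq_zero.mp this
end

section
/- Let g, d ≥ 1, let τ ∈ M_g(ℂ) be a complex g×g matrix whose entrywise imaginary part Im τ is invertible, let f be a complex g×d matrix, and let a, b ∈ ℝ^d. If Im(f)·a + Re(f)·b = 0 and Im(τf)·a + Re(τf)·b = 0, then f·(a + i·b) = 0 in ℂ^g. -/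
open Matrix Complex

/-- Key linear-algebra computation of §§3.2, 4.2: if `Im τ` is invertible and the real
vectors `a`, `b` satisfy `Im(f)a + Re(f)b = 0` and `Im(τf)a + Re(τf)b = 0`, then
`f(a + ib) = 0`. -/
theorem stmt_10 (g d : ℕ) (hg : 1 ≤ g) (hd : 1 ≤ d)
    (τ : Matrix (Fin g) (Fin g) ℂ) (hτ : IsUnit (τ.map Complex.im))
    (f : Matrix (Fin g) (Fin d) ℂ) (a b : Fin d → ℝ)
    (h1 : (f.map Complex.im).mulVec a + (f.map Complex.re).mulVec b = 0)
    (h2 : ((τ * f).map Complex.im).mulVec a + ((τ * f).map Complex.re).mulVec b = 0) :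
    f.mulVec (fun j => (a j : ℂ) + Complex.I * (b j : ℂ)) = 0 := by
  set v : Fin d → ℂ := fun j => (a j : ℂ) + Complex.I * (b j : ℂ) with hv
  have him : ∀ (M : Matrix (Fin g) (Fin d) ℂ) (i : Fin g),
      (M.mulVec v i).im
        = ((M.map Complex.im).mulVec a + (M.map Complex.re).mulVec b) i := by
    intro M i
    simp only [mulVec, dotProduct, Pi.add_apply, map_apply, hv]
    rw [Complex.im_sum, ← Finset.sum_add_distrib]
    refine Finset.sum_congr rfl fun j _ => ?_
    simp [Complex.mul_im]
    ring
  -- imaginary part of f.mulVec v vanishes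
  have h1' : ∀ i, (f.mulVec v i).im = 0 := fun i => by
    rw [him f i, h1]; rfl
  set r : Fin g → ℝ := fun i => (f.mulVec v i).re with hr
  have hreal : f.mulVec v = fun i => (r i : ℂ) := by
    funext i
    exact Complex.ext rfl (by simpa using h1' i)
  have h2' : (τ.map Complex.im).mulVec r = 0 := by
    funext i
    have key : ((τ * f).mulVec v i).im = 0 := by
      rw [him (τ * f) i, h2]; rfl
    have : ((τ * f).mulVec v i).im = ((τ.map Complex.im).mulVec r) i := by
      rw [← Matrix.mulVec_mulVec, hreal]
      simp only [mulVec, dotProduct, map_apply]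
      rw [Complex.im_sum]
      exact Finset.sum_congr rfl fun j _ => by simp [Complex.mul_im]
    rw [this] at key
    simpa using key
  have hr0 : r = 0 := by
    have hdet : IsUnit (τ.map Complex.im).det :=
      (Matrix.isUnit_iff_isUnit_det _).mp hτ
    calc r = ((τ.map Complex.im)⁻¹ * (τ.map Complex.im)).mulVec r := by
            rw [Matrix.nonsing_inv_mul _ hdet, Matrix.one_mulVec]
      _ = (τ.map Complex.im)⁻¹.mulVec ((τ.map Complex.im).mulVec r) := by
            rw [Matrix.mulVec_mulVec]
      _ = 0 := by rw [h2', Matrix.mulVec_zero]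
  rw [hreal, hr0]
  funext i; simp
end

section
/- Let U ⊆ ℂ^d be an open ball centered at the origin, let F, G : U → ℂ^g be holomorphic with F(0) = 0 and G(0) = 0, and let τ : U → M_g(ℂ) be holomorphic with dG = τ·dF, i.e., ∂G/∂z_m(z) = τ(z)·∂F/∂z_m(z) for every m and z. Assume that each component F_j is either identically zero or of the form F_j(z) = u_j(z)·z^{α_j} for a holomorphic function u_j nonvanishing on U and a multi-index α_j (so the zero divisor of each F_j is a union of coordinate hyperplanes). Then there exist an open ball U′ ⊆ U centered at the origin and a holomorphic map S : U′ → M_g(ℂ) such that G(z) = S(z)·F(z) for all z ∈ U′ and S(0) = τ(0). -/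
open Metric MeasureTheory
open scoped ENNReal NNReal

theorem real_smul_eq_complex {E : Type*} [NormedAddCommGroup E] [NormedSpace ℂ E]
    (t : ℝ) (y : E) : t • y = (t:ℂ) • y := by
  rw [← one_smul ℂ y, ← smul_assoc]
  norm_num

theorem analyticAt_integral_pow_smul {E : Type*} [NormedAddCommGroup E] [NormedSpace ℂ E]
    (k : ℕ) (Ψ : E → ℂ) (hΨ : AnalyticAt ℂ Ψ 0) :
    ∃ r > (0:ℝ), AnalyticOnNhd ℂ
      (fun z => ∫ t in (0:ℝ)..1, (t:ℂ)^k * Ψ (t • z)) (ball (0:E) r) := by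
  set V : E → ℂ := fun z => ∫ t in (0:ℝ)..1, (t:ℂ)^k * Ψ (t • z) with hV
  obtain ⟨p, R, hpR⟩ := hΨ
  obtain ⟨r, hr0, hrR⟩ := ENNReal.lt_iff_exists_nnreal_btwn.mp hpR.r_pos
  have hr0' : 0 < r := by exact_mod_cast hr0
  have hsum : Summable fun n => ‖p n‖ * (r:ℝ)^n :=
    p.summable_norm_mul_pow (lt_of_lt_of_le hrR hpR.r_le)
  set q : FormalMultilinearSeries ℂ E ℂ := fun n => (((n + k + 1 : ℕ) : ℂ)⁻¹) • p n with hq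
  have hqn : ∀ n, ‖q n‖ ≤ ‖p n‖ := by
    intro n
    have h1 : (1:ℝ) ≤ ((n + k + 1 : ℕ):ℝ) := by exact_mod_cast Nat.one_le_iff_ne_zero.mpr (by omega)
    have h2 : ‖q n‖ = ‖(((n + k + 1 : ℕ) : ℂ))⁻¹‖ * ‖p n‖ := by
      rw [hq]; exact norm_smul (((n + k + 1 : ℕ) : ℂ))⁻¹ (p n)
    rw [h2, norm_inv, Complex.norm_natCast]
    calc ((n + k + 1 : ℕ):ℝ)⁻¹ * ‖p n‖ ≤ 1 * ‖p n‖ :=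
          mul_le_mul_of_nonneg_right (inv_le_one_of_one_le₀ h1) (norm_nonneg _)
      _ = ‖p n‖ := one_mul _
  have hVb : HasFPowerSeriesOnBall V q 0 (r : ℝ≥0∞) := by
    refine ⟨?_, by exact_mod_cast hr0, ?_⟩
    · apply q.le_radius_of_summable
      exact hsum.of_nonneg_of_le (fun n => by positivity)
        (fun n => by exact mul_le_mul_of_nonneg_right (hqn n) (by positivity))
    · intro y hy
      rw [mem_emetric_ball_zero_iff] at hy
      have hyr : ‖y‖ < r := by exact_mod_cast hy
      set a : ℕ → ℂ := fun n => p n (fun _ => y) with ha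
      -- pointwise HasSum in t
      have hS : ∀ t : ℝ, |t| ≤ 1 →
          HasSum (fun n => (t:ℂ)^(n+k) * a n) ((t:ℂ)^k * Ψ (t • y)) := by
        intro t ht
        have hmem : t • y ∈ Metric.eball (0:E) R := by
          rw [mem_emetric_ball_zero_iff]
          have : ‖t • y‖ ≤ ‖y‖ := by
            rw [norm_smul]
            calc |t| * ‖y‖ ≤ 1 * ‖y‖ := by gcongr
              _ = ‖y‖ := one_mul _
          calc (‖t • y‖₊ : ℝ≥0∞) ≤ (‖y‖₊ : ℝ≥0∞) := by exact_mod_cast this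
            _ < (r : ℝ≥0∞) := by exact_mod_cast hy
            _ < R := hrR
        have h0 := hpR.hasSum hmem
        rw [zero_add] at h0
        have hterm : ∀ n, p n (fun _ : Fin n => t • y) = (t:ℂ)^n * a n := by
          intro n
          have h1 : (fun _ : Fin n => t • y) = fun _ : Fin n => (t:ℂ) • y := by
            funext _
            exact real_smul_eq_complex t y
          rw [h1]
          have := (p n).map_smul_univ (fun _ : Fin n => (t:ℂ)) (fun _ => y)
          rw [this]
          simp [ha, smul_eq_mul]
        rw [funext hterm] at h0
        have h2 := h0.mul_left ((t:ℂ)^k)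
        have h3 : (fun n => (t:ℂ)^(n+k) * a n) = fun n => (t:ℂ)^k * ((t:ℂ)^n * a n) :=
          funext fun n => by ring
        rw [h3]; exact h2
      set μ := volume.restrict (Set.Ioc (0:ℝ) 1) with hμ
      have hμuniv : μ Set.univ = 1 := by
        rw [hμ, Measure.restrict_apply_univ, Real.volume_Ioc]
        norm_num
      have : IsFiniteMeasure μ := ⟨by rw [hμuniv]; exact ENNReal.one_lt_top⟩
      set Fse : ℕ → ℝ → ℂ := fun n t => (t:ℂ)^(n+k) * a n with hFse
      have h_int : ∀ n, Integrable (Fse n) μ := by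
        intro n
        exact ((Complex.continuous_ofReal.pow (n+k)).mul continuous_const).integrableOn_Ioc
      have h_an : ∀ n, ‖a n‖ ≤ ‖p n‖ * (r:ℝ)^n := by
        intro n
        calc ‖a n‖ ≤ ‖p n‖ * ∏ _i : Fin n, ‖y‖ := (p n).le_opNorm _
          _ = ‖p n‖ * ‖y‖^n := by rw [Finset.prod_const]; simp
          _ ≤ ‖p n‖ * (r:ℝ)^n := by
              have := hyr.le
              gcongr
      have h_sum : Summable fun n => ∫ t, ‖Fse n t‖ ∂μ := by
        apply hsum.of_nonneg_of_le (fun n => integral_nonneg (fun t => norm_nonneg _))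
        intro n
        calc ∫ t, ‖Fse n t‖ ∂μ ≤ ∫ _t, ‖a n‖ ∂μ := by
              apply integral_mono_ae (h_int n).norm (integrable_const _)
              filter_upwards [ae_restrict_mem measurableSet_Ioc] with t ht
              rw [hFse]
              simp only [norm_mul, norm_pow, Complex.norm_real]
              calc |t|^(n+k) * ‖a n‖ ≤ 1 * ‖a n‖ :=
                    mul_le_mul_of_nonneg_right
                      (pow_le_one₀ (abs_nonneg t) (abs_le.mpr ⟨by linarith [ht.1], ht.2⟩))
                      (norm_nonneg _)
                _ = ‖a n‖ := one_mul _
          _ = ‖a n‖ := by rw [integral_const, measureReal_def, hμuniv]; simp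
          _ ≤ ‖p n‖ * (r:ℝ)^n := h_an n
      have hhs := hasSum_integral_of_summable_integral_norm h_int h_sum
      have hA : ∫ t, (∑' n, Fse n t) ∂μ = V (0 + y) := by
        rw [zero_add]
        show _ = ∫ t in (0:ℝ)..1, (t:ℂ)^k * Ψ (t • y)
        rw [intervalIntegral.integral_of_le zero_le_one]
        apply integral_congr_ae
        filter_upwards [ae_restrict_mem measurableSet_Ioc] with t ht
        exact (hS t (abs_le.mpr ⟨by linarith [ht.1], ht.2⟩)).tsum_eq
      have hB : ∀ n, ∫ t, Fse n t ∂μ = q n (fun _ => y) := by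
        intro n
        have h1 : (fun t : ℝ => Fse n t) = fun t : ℝ => (t^(n+k) : ℝ) • a n := by
          funext t
          rw [hFse]
          simp [Complex.real_smul, Complex.ofReal_pow]
        rw [h1, integral_smul_const]
        have h2 : ∫ t, t^(n+k) ∂μ = ((n+k+1:ℕ):ℝ)⁻¹ := by
          rw [hμ, ← intervalIntegral.integral_of_le zero_le_one, integral_pow]
          push_cast
          rw [one_pow, zero_pow (by omega)]
          ring
        rw [h2, hq]
        simp only [ContinuousMultilinearMap.smul_apply, ← ha]
        rw [Complex.real_smul, smul_eq_mul]
        push_cast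
        ring
      rw [hA] at hhs
      rw [funext hB] at hhs
      exact hhs
  have hA0 : AnalyticAt ℂ V 0 := hVb.analyticAt
  exact hA0.exists_ball_analyticOnNhd


open Matrix

theorem clm_apply_eq_sum_single {d : ℕ} (L : (Fin d → ℂ) →L[ℂ] ℂ) (v : Fin d → ℂ) :
    L v = ∑ m : Fin d, v m * L (Pi.single m 1) := by
  have hv : v = ∑ m : Fin d, v m • (Pi.single m (1:ℂ) : Fin d → ℂ) := by
    funext x
    rw [Finset.sum_apply]
    simp [Pi.single_apply]
  conv_lhs => rw [hv]
  rw [map_sum]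
  simp [smul_eq_mul]

/-- auxiliary integrand -/
noncomputable def psiAux {d : ℕ} (cf : (Fin d → ℂ) → ℂ) (uj : (Fin d → ℂ) → ℂ) : (Fin d → ℂ) → ℂ :=
  fun w => uj w * (fderiv ℂ cf w) w

/-- auxiliary Hadamard-type integral -/
noncomputable def vAux {d : ℕ} (k : ℕ) (Ψ : (Fin d → ℂ) → ℂ) : (Fin d → ℂ) → ℂ :=
  fun z => ∫ t in (0:ℝ)..1, (t:ℂ) ^ k * Ψ (t • z)

/-- Lemma A.2: if moreover each component `F_j` is, up to a holomorphic unit, a monomial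
(so its zero divisor is a union of coordinate hyperplanes), then on a smaller ball one
can write `G = S F` with `S` holomorphic and `S(0) = τ(0)`. -/
theorem stmt_14 (d g : ℕ) (hd : 1 ≤ d) (hg : 1 ≤ g) (ρ : ℝ) (hρ : 0 < ρ)
    (F G : (Fin d → ℂ) → Fin g → ℂ)
    (τ : (Fin d → ℂ) → Matrix (Fin g) (Fin g) ℂ)
    (hF : AnalyticOnNhd ℂ F (ball 0 ρ)) (hG : AnalyticOnNhd ℂ G (ball 0 ρ))
    (hτ : ∀ i j : Fin g, AnalyticOnNhd ℂ (fun w => τ w i j) (ball 0 ρ))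
    (hF0 : F 0 = 0) (hG0 : G 0 = 0)
    (hode : ∀ z ∈ ball (0 : Fin d → ℂ) ρ, ∀ m : Fin d,
      (fun i => fderiv ℂ (fun w => G w i) z (Pi.single m 1)) =
        (τ z).mulVec (fun j => fderiv ℂ (fun w => F w j) z (Pi.single m 1)))
    (hform : ∀ j : Fin g,
      (∀ z ∈ ball (0 : Fin d → ℂ) ρ, F z j = 0) ∨
      (∃ (u : (Fin d → ℂ) → ℂ) (α : Fin d → ℕ),
        AnalyticOnNhd ℂ u (ball 0 ρ) ∧ (∀ z ∈ ball (0 : Fin d → ℂ) ρ, u z ≠ 0) ∧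
        ∀ z ∈ ball (0 : Fin d → ℂ) ρ, F z j = u z * ∏ m : Fin d, (z m) ^ (α m))) :
    ∃ ρ' : ℝ, 0 < ρ' ∧ ρ' ≤ ρ ∧
      ∃ S : (Fin d → ℂ) → Matrix (Fin g) (Fin g) ℂ,
        (∀ i j : Fin g, AnalyticOnNhd ℂ (fun w => S w i j) (ball 0 ρ')) ∧
        (∀ z ∈ ball (0 : Fin d → ℂ) ρ', G z = (S z).mulVec (F z)) ∧
        S 0 = τ 0 := by
  classical
  have hGa : ∀ i : Fin g, AnalyticOnNhd ℂ (fun w => G w i) (ball 0 ρ) := fun i => by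
    have := (ContinuousLinearMap.proj (R := ℂ) (φ := fun _ : Fin g => ℂ) i).comp_analyticOnNhd hG
    simpa [Function.comp_def] using this
  have hFa : ∀ j : Fin g, AnalyticOnNhd ℂ (fun w => F w j) (ball 0 ρ) := fun j => by
    have := (ContinuousLinearMap.proj (R := ℂ) (φ := fun _ : Fin g => ℂ) j).comp_analyticOnNhd hF
    simpa [Function.comp_def] using this
  have h0mem : (0 : Fin d → ℂ) ∈ ball (0 : Fin d → ℂ) ρ := mem_ball_self hρ
  have hballm : ∀ z ∈ ball (0 : Fin d → ℂ) ρ, ∀ t : ℝ, |t| ≤ 1 →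
      t • z ∈ ball (0 : Fin d → ℂ) ρ := by
    intro z hz t ht
    rw [mem_ball_zero_iff] at hz ⊢
    calc ‖t • z‖ = |t| * ‖z‖ := by rw [norm_smul, Real.norm_eq_abs]
      _ ≤ 1 * ‖z‖ := by gcongr
      _ < ρ := by rwa [one_mul]
  -- put `F` in a uniform normal form
  have hform' : ∀ j : Fin g, ∃ (u : (Fin d → ℂ) → ℂ) (α : Fin d → ℕ) (c : ℂ),
      c * c = c ∧ AnalyticOnNhd ℂ u (ball 0 ρ) ∧ (∀ z ∈ ball (0 : Fin d → ℂ) ρ, u z ≠ 0) ∧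
      1 ≤ ∑ m, α m ∧ ∀ z ∈ ball (0 : Fin d → ℂ) ρ, F z j = c * (u z * ∏ m, (z m) ^ (α m)) := by
    intro j
    rcases hform j with h0 | ⟨u, α, hu, hune, hFj⟩
    · exact ⟨fun _ => 1, fun _ => 1, 0, by ring, analyticOnNhd_const, fun z _ => one_ne_zero,
        by simpa using hd, fun z hz => by rw [h0 z hz]; ring⟩
    · refine ⟨u, α, 1, by ring, hu, hune, ?_, fun z hz => by rw [hFj z hz]; ring⟩
      by_contra hcon
      push_neg at hcon
      have hs0 : ∑ m, α m = 0 := by omega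
      have hα0 : ∀ m, α m = 0 := fun m =>
        (Finset.sum_eq_zero_iff.mp hs0) m (Finset.mem_univ m)
      have hF00 : F 0 j = u 0 := by
        rw [hFj 0 h0mem]
        simp [hα0]
      refine hune 0 h0mem ?_
      rw [← hF00, hF0]
      simp
  choose u α c hc hu hune hα hFeq using hform'
  set k : Fin g → ℕ := fun j => (∑ m, α j m) - 1 with hkdef
  have hk : ∀ j, ∑ m, α j m = k j + 1 := fun j => by
    have := hα j
    simp only [hkdef]
    omega
  -- analyticity of the auxiliary integrands
  have hτd : ∀ i j, AnalyticOnNhd ℂ (fderiv ℂ (fun x => τ x i j)) (ball 0 ρ) :=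
    fun i j => (hτ i j).fderiv
  have happ : ∀ i j, AnalyticOnNhd ℂ
      (fun w => (fderiv ℂ (fun x => τ x i j) w) w) (ball 0 ρ) := by
    intro i j x hx
    have hb := (ContinuousLinearMap.id ℂ ((Fin d → ℂ) →L[ℂ] ℂ)).analyticAt_bilinear
      (fderiv ℂ (fun x => τ x i j) x, x)
    have hp : AnalyticAt ℂ (fun w => (fderiv ℂ (fun x => τ x i j) w, w)) x :=
      (hτd i j x hx).prod analyticAt_id
    have hcmp := AnalyticAt.comp
      (g := fun p : ((Fin d → ℂ) →L[ℂ] ℂ) × (Fin d → ℂ) =>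
        (ContinuousLinearMap.id ℂ ((Fin d → ℂ) →L[ℂ] ℂ)) p.1 p.2)
      (f := fun w => (fderiv ℂ (fun x => τ x i j) w, w)) hb hp
    simpa [Function.comp_def] using hcmp
  have hΨa : ∀ i j, AnalyticOnNhd ℂ (psiAux (fun x => τ x i j) (u j)) (ball 0 ρ) :=
    fun i j => (hu j).mul (happ i j)
  have hVana : ∀ i j, ∃ r > (0:ℝ), AnalyticOnNhd ℂ
      (vAux (k j) (psiAux (fun x => τ x i j) (u j))) (ball 0 r) := fun i j =>
    analyticAt_integral_pow_smul (k j) _ (hΨa i j 0 h0mem)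
  choose rad hrad0 hradA using hVana
  have hne : (Finset.univ : Finset (Fin g × Fin g)).Nonempty :=
    ⟨(⟨0, hg⟩, ⟨0, hg⟩), Finset.mem_univ _⟩
  refine ⟨min ρ (Finset.univ.inf' hne fun p : Fin g × Fin g => rad p.1 p.2), ?_, min_le_left _ _, ?_⟩
  · exact lt_min hρ (by
      rw [Finset.lt_inf'_iff]
      exact fun b _ => hrad0 b.1 b.2)
  set ρ' : ℝ := min ρ (Finset.univ.inf' hne fun p : Fin g × Fin g => rad p.1 p.2) with hρ'def
  have hsubρ : ball (0 : Fin d → ℂ) ρ' ⊆ ball 0 ρ := ball_subset_ball (min_le_left _ _)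
  have hsubr : ∀ i j, ball (0 : Fin d → ℂ) ρ' ⊆ ball 0 (rad i j) := fun i j =>
    ball_subset_ball (le_trans (min_le_right _ _) (Finset.inf'_le _ (Finset.mem_univ (i, j))))
  -- the key integral identity
  have keyG : ∀ z ∈ ball (0 : Fin d → ℂ) ρ, ∀ i : Fin g,
      G z i = (∑ j, τ z i j * F z j) - ∑ j, (c j * ∏ m, (z m) ^ (α j m)) *
        vAux (k j) (psiAux (fun x => τ x i j) (u j)) z := by
    intro z hz i
    have hmem : ∀ t ∈ Set.uIcc (0:ℝ) 1, t • z ∈ ball (0 : Fin d → ℂ) ρ := by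
      intro t ht
      rw [Set.uIcc_of_le zero_le_one] at ht
      exact hballm z hz t (abs_le.mpr ⟨by linarith [ht.1], ht.2⟩)
    have hderiv : ∀ t ∈ Set.uIcc (0:ℝ) 1,
        HasDerivAt (fun s : ℝ => G (s • z) i - ∑ j, τ (s • z) i j * F (s • z) j)
          (-(∑ j, (c j * ∏ m, (z m) ^ (α j m)) *
            ((t:ℂ) ^ (k j) * psiAux (fun x => τ x i j) (u j) (t • z)))) t := by
      intro t ht
      have hw : t • z ∈ ball (0 : Fin d → ℂ) ρ := hmem t ht
      have hdz : HasDerivAt (fun s : ℝ => s • z) z t := by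
        simpa using (hasDerivAt_id t).smul_const z
      have hdG : HasDerivAt (fun s : ℝ => G (s • z) i)
          ((fderiv ℂ (fun w => G w i) (t • z)) z) t :=
        by have h := (((hGa i) (t • z) hw).differentiableAt.hasFDerivAt.restrictScalars ℝ).comp_hasDerivAt t hdz; exact h
      have hdF : ∀ j, HasDerivAt (fun s : ℝ => F (s • z) j)
          ((fderiv ℂ (fun w => F w j) (t • z)) z) t := fun j =>
        by have h := (((hFa j) (t • z) hw).differentiableAt.hasFDerivAt.restrictScalars ℝ).comp_hasDerivAt t hdz; exact h
      have hdτ : ∀ j, HasDerivAt (fun s : ℝ => τ (s • z) i j)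
          ((fderiv ℂ (fun x => τ x i j) (t • z)) z) t := fun j =>
        by have h := (((hτ i j) (t • z) hw).differentiableAt.hasFDerivAt.restrictScalars ℝ).comp_hasDerivAt t hdz; exact h
      have hsum : HasDerivAt (fun s : ℝ => ∑ j, τ (s • z) i j * F (s • z) j)
          (∑ j, ((fderiv ℂ (fun x => τ x i j) (t • z)) z * F (t • z) j +
            τ (t • z) i j * (fderiv ℂ (fun w => F w j) (t • z)) z)) t :=
        HasDerivAt.fun_sum fun j _ => (hdτ j).mul (hdF j)
      have hraw := hdG.sub hsum
      have hodez : (fderiv ℂ (fun w => G w i) (t • z)) z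
          = ∑ j, τ (t • z) i j * (fderiv ℂ (fun w => F w j) (t • z)) z := by
        rw [clm_apply_eq_sum_single]
        have h1 : ∀ m : Fin d, fderiv ℂ (fun w => G w i) (t • z) (Pi.single m 1)
            = ∑ j, τ (t • z) i j * fderiv ℂ (fun w => F w j) (t • z) (Pi.single m 1) := by
          intro m
          have h2 := congrFun (hode (t • z) hw m) i
          simpa [Matrix.mulVec, dotProduct] using h2
        calc ∑ m, z m * fderiv ℂ (fun w => G w i) (t • z) (Pi.single m 1)
            = ∑ m, ∑ j, τ (t • z) i j *
                (z m * fderiv ℂ (fun w => F w j) (t • z) (Pi.single m 1)) := by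
              refine Finset.sum_congr rfl fun m _ => ?_
              rw [h1 m, Finset.mul_sum]
              exact Finset.sum_congr rfl fun jj _ => by ring
          _ = ∑ j, τ (t • z) i j *
                ∑ m, z m * fderiv ℂ (fun w => F w j) (t • z) (Pi.single m 1) := by
              rw [Finset.sum_comm]
              exact Finset.sum_congr rfl fun j _ => by rw [Finset.mul_sum]
          _ = ∑ j, τ (t • z) i j * (fderiv ℂ (fun w => F w j) (t • z)) z :=
              Finset.sum_congr rfl fun j _ => by rw [← clm_apply_eq_sum_single]
      have halg : ∀ j : Fin g, (fderiv ℂ (fun x => τ x i j) (t • z)) z * F (t • z) j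
          = (c j * ∏ m, (z m) ^ (α j m)) *
            ((t:ℂ) ^ (k j) * psiAux (fun x => τ x i j) (u j) (t • z)) := by
        intro j
        have hsm : (t • z : Fin d → ℂ) = (t:ℂ) • z := real_smul_eq_complex t z
        have hL : ∀ L : (Fin d → ℂ) →L[ℂ] ℂ, L (t • z) = (t:ℂ) * L z := fun L => by
          rw [hsm, L.map_smul, smul_eq_mul]
        have hcoords : ∀ m, (t • z) m = (t:ℂ) * z m := fun m => by
          rw [hsm]
          rfl
        have hprod : (∏ m, ((t • z) m) ^ (α j m))
            = (t:ℂ) ^ (k j + 1) * ∏ m, (z m) ^ (α j m) := by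
          calc ∏ m, ((t • z) m) ^ (α j m) = ∏ m, ((t:ℂ) * z m) ^ (α j m) :=
                Finset.prod_congr rfl fun m _ => by rw [hcoords m]
            _ = ∏ m, ((t:ℂ) ^ (α j m) * (z m) ^ (α j m)) :=
                Finset.prod_congr rfl fun m _ => mul_pow _ _ _
            _ = ((t:ℂ) ^ (∑ m, α j m)) * ∏ m, (z m) ^ (α j m) := by
                rw [Finset.prod_mul_distrib, Finset.prod_pow_eq_pow_sum]
            _ = (t:ℂ) ^ (k j + 1) * ∏ m, (z m) ^ (α j m) := by rw [hk j]
        rw [hFeq j (t • z) hw]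
        simp only [psiAux]
        rw [hL (fderiv ℂ (fun x => τ x i j) (t • z)), hprod, pow_succ]
        ring
      have heq : (fderiv ℂ (fun w => G w i) (t • z)) z -
          (∑ j, ((fderiv ℂ (fun x => τ x i j) (t • z)) z * F (t • z) j +
            τ (t • z) i j * (fderiv ℂ (fun w => F w j) (t • z)) z))
          = -(∑ j, (c j * ∏ m, (z m) ^ (α j m)) *
            ((t:ℂ) ^ (k j) * psiAux (fun x => τ x i j) (u j) (t • z))) := by
        rw [hodez, Finset.sum_add_distrib, ← Finset.sum_congr rfl fun j _ => halg j]
        ring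
      rw [heq] at hraw
      exact hraw
    -- continuity of the integrand
    have hcont : ∀ j : Fin g, ContinuousOn
        (fun t : ℝ => (t:ℂ) ^ (k j) * psiAux (fun x => τ x i j) (u j) (t • z))
        (Set.uIcc (0:ℝ) 1) := by
      intro j
      have h1 : ContinuousOn (fun t : ℝ => t • z) (Set.uIcc (0:ℝ) 1) :=
        (continuous_id.smul continuous_const).continuousOn
      have h2 : ContinuousOn (psiAux (fun x => τ x i j) (u j)) (ball (0 : Fin d → ℂ) ρ) :=
        (hΨa i j).continuousOn
      exact ((Complex.continuous_ofReal.pow (k j)).continuousOn).mul (h2.comp h1 hmem)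
    have hint : ∀ j : Fin g, IntervalIntegrable
        (fun t : ℝ => (c j * ∏ m, (z m) ^ (α j m)) *
          ((t:ℂ) ^ (k j) * psiAux (fun x => τ x i j) (u j) (t • z))) volume 0 1 :=
      fun j => (continuousOn_const.mul (hcont j)).intervalIntegrable
    have hint' : IntervalIntegrable
        (fun t : ℝ => -(∑ j, (c j * ∏ m, (z m) ^ (α j m)) *
          ((t:ℂ) ^ (k j) * psiAux (fun x => τ x i j) (u j) (t • z)))) volume 0 1 := by
      apply ContinuousOn.intervalIntegrable
      apply ContinuousOn.neg
      exact continuousOn_finset_sum _ fun j _ => continuousOn_const.mul (hcont j)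
    have hFTC := intervalIntegral.integral_eq_sub_of_hasDerivAt hderiv hint'
    have hval : ∫ t in (0:ℝ)..1, -(∑ j, (c j * ∏ m, (z m) ^ (α j m)) *
          ((t:ℂ) ^ (k j) * psiAux (fun x => τ x i j) (u j) (t • z)))
        = -(∑ j, (c j * ∏ m, (z m) ^ (α j m)) *
            vAux (k j) (psiAux (fun x => τ x i j) (u j)) z) := by
      rw [intervalIntegral.integral_neg, intervalIntegral.integral_finset_sum fun j _ => hint j]
      congr 1
      refine Finset.sum_congr rfl fun j _ => ?_
      rw [intervalIntegral.integral_const_mul]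
      rfl
    rw [hval] at hFTC
    simp only [one_smul, zero_smul, hG0, hF0, Pi.zero_apply, mul_zero,
      Finset.sum_const_zero, sub_zero] at hFTC
    linear_combination -hFTC
  refine ⟨fun z => Matrix.of fun i j => τ z i j - c j * (u j z)⁻¹ *
      vAux (k j) (psiAux (fun x => τ x i j) (u j)) z, ?_, ?_, ?_⟩
  · intro i j
    have h1 : AnalyticOnNhd ℂ (fun w => τ w i j) (ball 0 ρ') := (hτ i j).mono hsubρ
    have h2 : AnalyticOnNhd ℂ (fun w => (u j w)⁻¹) (ball 0 ρ') :=
      AnalyticOnNhd.inv ((hu j).mono hsubρ) (fun x hx => hune j x (hsubρ hx))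
    have h3 : AnalyticOnNhd ℂ (vAux (k j) (psiAux (fun x => τ x i j) (u j))) (ball 0 ρ') :=
      (hradA i j).mono (hsubr i j)
    exact h1.sub ((analyticOnNhd_const.mul h2).mul h3)
  · intro z hz
    have hz' : z ∈ ball (0 : Fin d → ℂ) ρ := hsubρ hz
    funext i
    have hmv : ((Matrix.of fun i j => τ z i j - c j * (u j z)⁻¹ *
        vAux (k j) (psiAux (fun x => τ x i j) (u j)) z).mulVec (F z)) i
        = ∑ j, (τ z i j - c j * (u j z)⁻¹ *
            vAux (k j) (psiAux (fun x => τ x i j) (u j)) z) * F z j := by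
      simp [Matrix.mulVec, dotProduct]
    rw [hmv, keyG z hz' i, ← Finset.sum_sub_distrib]
    refine Finset.sum_congr rfl fun j _ => ?_
    have hu0 : u j z ≠ 0 := hune j z hz'
    rw [hFeq j z hz']
    have e1 : (τ z i j - c j * (u j z)⁻¹ * vAux (k j) (psiAux (fun x => τ x i j) (u j)) z) *
        (c j * (u j z * ∏ m, (z m) ^ (α j m)))
        = τ z i j * (c j * (u j z * ∏ m, (z m) ^ (α j m))) -
          (c j * c j) * ((u j z)⁻¹ * u j z) *
            ((∏ m, (z m) ^ (α j m)) * vAux (k j) (psiAux (fun x => τ x i j) (u j)) z) := by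
      ring
    rw [e1, hc j, inv_mul_cancel₀ hu0, mul_one]
    ring
  · ext i j
    simp only [Matrix.of_apply]
    have hψ0 : psiAux (fun x => τ x i j) (u j) (0 : Fin d → ℂ) = 0 := by
      simp [psiAux]
    have hV0 : vAux (k j) (psiAux (fun x => τ x i j) (u j)) 0 = 0 := by
      simp only [vAux, smul_zero, hψ0, mul_zero]
      simp
    rw [hV0]
    ring
end

section
/- Let ε : {(z₁, z₂) ∈ ℂ² : z₁ + z₂² ≠ 0} → ℂ be the function ε(z₁, z₂) = (z₁²/2 + z₁z₂²/3)/(z₁ + z₂²). Then ε does not extend continuously to the origin: there is no continuous function on any open neighborhood of (0,0) in ℂ² whose restriction to the complement of {z₁ + z₂² = 0} agrees with ε. Equivalently, there exist two sequences in the domain of ε converging to (0,0) along which ε converges to two different limits. -/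
open Filter Topology

/-- Remark after Lemma A.2: the function
`ε(z₁,z₂) = (z₁²/2 + z₁z₂²/3)/(z₁ + z₂²)` does not extend continuously to the origin:
no continuous function on a neighborhood of `(0,0)` agrees with it off `{z₁ + z₂² = 0}`. -/
theorem stmt_17 :
    ¬ ∃ (V : Set (ℂ × ℂ)) (f : ℂ × ℂ → ℂ), IsOpen V ∧ ((0 : ℂ), (0 : ℂ)) ∈ V ∧
      ContinuousOn f V ∧
      ∀ p ∈ V, p.1 + p.2 ^ 2 ≠ 0 →
        f p = (p.1 ^ 2 / 2 + p.1 * p.2 ^ 2 / 3) / (p.1 + p.2 ^ 2) := by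
  rintro ⟨V, f, hV, h0, hf, hval⟩
  have hc : ContinuousAt f ((0 : ℂ), (0 : ℂ)) := hf.continuousAt (hV.mem_nhds h0)
  set t : ℕ → ℝ := fun n => 1 / (n + 2) with ht
  have htpos : ∀ n, 0 < t n := fun n => by positivity
  have htlt : ∀ n, t n < 1 := by
    intro n
    have hn : (0 : ℝ) ≤ n := Nat.cast_nonneg n
    have : (1 : ℝ) < n + 2 := by linarith
    simpa [ht] using (div_lt_one (by positivity)).2 this
  have htend : Tendsto t atTop (𝓝 0) := by
    have h2 := (tendsto_one_div_add_atTop_nhds_zero_nat (𝕜 := ℝ)).comp (tendsto_add_atTop_nat 1)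
    refine h2.congr fun n => ?_
    simp only [ht, Function.comp]
    push_cast
    ring_nf
  have htC : Tendsto (fun n => ((t n : ℂ))) atTop (𝓝 0) := by
    have := (Complex.continuous_ofReal.tendsto 0).comp htend
    simpa [Function.comp_def] using this
  have htne : ∀ n, (t n : ℂ) ≠ 0 := fun n => by
    exact_mod_cast (htpos n).ne'
  -- First sequence: (t n, 0)
  have ha : Tendsto (fun n => (((t n : ℂ)), (0 : ℂ))) atTop (𝓝 ((0 : ℂ), (0 : ℂ))) :=
    htC.prodMk_nhds tendsto_const_nhds
  have hamem : ∀ᶠ n in atTop, (((t n : ℂ)), (0 : ℂ)) ∈ V := ha.eventually (hV.mem_nhds h0)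
  have h1 : Tendsto (fun n => f (((t n : ℂ)), 0)) atTop (𝓝 (f (0, 0))) := hc.tendsto.comp ha
  have h1' : Tendsto (fun n => f (((t n : ℂ)), 0)) atTop (𝓝 0) := by
    have heq : (fun n => f (((t n : ℂ)), 0)) =ᶠ[atTop] fun n => (t n : ℂ) / 2 := by
      filter_upwards [hamem] with n hn
      rw [hval _ hn (by simpa using htne n)]
      have h := htne n
      field_simp
      linear_combination 3 * mul_inv_cancel₀ h
    have : Tendsto (fun n => (t n : ℂ) / 2) atTop (𝓝 0) := by
      simpa using htC.div_const 2
    exact this.congr' heq.symm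
  have hf0 : f (0, 0) = 0 := tendsto_nhds_unique h1 h1'
  -- Second sequence: (t n, I * sqrt (t n - t n ^ 2))
  set s : ℕ → ℂ := fun n => Complex.I * Real.sqrt (t n - t n ^ 2) with hs
  have hs2 : ∀ n, (s n) ^ 2 = (t n : ℂ) ^ 2 - (t n : ℂ) := by
    intro n
    have hnn : 0 ≤ t n - t n ^ 2 := by nlinarith [htpos n, htlt n]
    have : (Real.sqrt (t n - t n ^ 2) : ℂ) ^ 2 = ((t n - t n ^ 2 : ℝ) : ℂ) := by
      rw [← Complex.ofReal_pow, Real.sq_sqrt hnn]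
    rw [hs]
    push_cast
    rw [mul_pow, Complex.I_sq]
    push_cast at this
    rw [this]
    ring
  have hsT : Tendsto s atTop (𝓝 0) := by
    have hsub : Tendsto (fun n => t n - t n ^ 2) atTop (𝓝 0) := by
      simpa using htend.sub (htend.pow 2)
    have : Tendsto (fun n => Real.sqrt (t n - t n ^ 2)) atTop (𝓝 0) := by
      simpa [Function.comp_def] using (Real.continuous_sqrt.tendsto 0).comp hsub
    have hC : Tendsto (fun n => ((Real.sqrt (t n - t n ^ 2) : ℂ))) atTop (𝓝 0) := by
      simpa [Function.comp_def] using (Complex.continuous_ofReal.tendsto 0).comp this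
    simpa [hs] using hC.const_mul Complex.I
  have hb : Tendsto (fun n => (((t n : ℂ)), s n)) atTop (𝓝 ((0 : ℂ), (0 : ℂ))) :=
    htC.prodMk_nhds hsT
  have hbmem : ∀ᶠ n in atTop, (((t n : ℂ)), s n) ∈ V := hb.eventually (hV.mem_nhds h0)
  have h2 : Tendsto (fun n => f (((t n : ℂ)), s n)) atTop (𝓝 (f (0, 0))) := hc.tendsto.comp hb
  have h2' : Tendsto (fun n => f (((t n : ℂ)), s n)) atTop (𝓝 (1 / 6)) := by
    have heq : (fun n => f (((t n : ℂ)), s n)) =ᶠ[atTop] fun n => 1 / 6 + (t n : ℂ) / 3 := by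
      filter_upwards [hbmem] with n hn
      have hden : ((t n : ℂ)) + (s n) ^ 2 = (t n : ℂ) ^ 2 := by rw [hs2 n]; ring
      rw [hval _ hn (by rw [hden]; exact pow_ne_zero 2 (htne n))]
      simp only [hden, hs2 n]
      have h := htne n
      field_simp
      linear_combination (6 + 12 * (t n : ℂ)) * mul_inv_cancel₀ h
    have : Tendsto (fun n => 1 / 6 + (t n : ℂ) / 3) atTop (𝓝 (1 / 6)) := by
      simpa using tendsto_const_nhds.add (htC.div_const 3)
    exact this.congr' heq.symm
  have : (0 : ℂ) = 1 / 6 := hf0 ▸ tendsto_nhds_unique h2 h2'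
  norm_num at this
end
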